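/- Let M = (1/√2)·e^{7πi/12}·[[1, i],[1, −i]] and let M̄ denote its entrywise complex conjugate. The eigenvalues of M are 1 and e^{2πi/3}, while the eigenvalues of M̄ are 1 and e^{−2πi/3}; in particular, there is no invertible 2×2 complex matrix P with P⁻¹·M·P = M̄, i.e., M is not similar to M̄. -/
import Mathlib


open Matrix Complex

noncomputable section

/-- The associativity matrix `M = a^1_{x,x,x}`. -/
def MM : Matrix (Fin 2) (Fin 2) ℂ :=
  ((1 / (Real.sqrt 2 : ℂ)) * Complex.exp (7 * Real.pi * Complex.I / 12)) •
    !![1, Complex.I; 1, -Complex.I]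

/-- The entrywise complex conjugate of `M`. -/
def MMbar : Matrix (Fin 2) (Fin 2) ℂ := MM.map (starRingEnd ℂ)

/-- The 24th root of unity `e^{πi/12}`. -/
def ee : ℂ := Complex.exp (Real.pi * Complex.I / 12)

lemma he3 : ee ^ 3 = ((Real.sqrt 2 / 2 : ℝ) : ℂ) + ((Real.sqrt 2 / 2 : ℝ) : ℂ) * I := by
  rw [ee, ← Complex.exp_nat_mul]
  have : (3 : ℕ) * ((Real.pi : ℂ) * I / 12) = (Real.pi / 4 : ℝ) * I := by push_cast; ring
  rw [this, Complex.exp_mul_I, ← Complex.ofReal_cos, ← Complex.ofReal_sin,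
    Real.cos_pi_div_four, Real.sin_pi_div_four]

lemma he4 : ee ^ 4 = (1/2 : ℂ) + ((Real.sqrt 3 / 2 : ℝ) : ℂ) * I := by
  rw [ee, ← Complex.exp_nat_mul]
  have : (4 : ℕ) * ((Real.pi : ℂ) * I / 12) = (Real.pi / 3 : ℝ) * I := by push_cast; ring
  rw [this, Complex.exp_mul_I, ← Complex.ofReal_cos, ← Complex.ofReal_sin,
    Real.cos_pi_div_three, Real.sin_pi_div_three]
  norm_num

lemma he6 : ee ^ 6 = I := by
  rw [ee, ← Complex.exp_nat_mul]
  have : (6 : ℕ) * ((Real.pi : ℂ) * I / 12) = (Real.pi / 2 : ℝ) * I := by push_cast; ring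
  rw [this, Complex.exp_mul_I, ← Complex.ofReal_cos, ← Complex.ofReal_sin,
    Real.cos_pi_div_two, Real.sin_pi_div_two]
  norm_num

lemma h7exp : Complex.exp (7 * Real.pi * Complex.I / 12) = ee ^ 7 := by
  rw [ee, ← Complex.exp_nat_mul]; ring_nf

lemma hwexp : Complex.exp (2 * Real.pi * Complex.I / 3) = ee ^ 8 := by
  rw [ee, ← Complex.exp_nat_mul]; ring_nf

lemma hw'exp : Complex.exp (-(2 * Real.pi * Complex.I) / 3) = ee ^ 16 := by
  have h24 : ee ^ 24 = 1 := by
    rw [ee, ← Complex.exp_nat_mul]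
    have : (24 : ℕ) * ((Real.pi : ℂ) * I / 12) = 2 * Real.pi * I := by push_cast; ring
    rw [this, Complex.exp_two_pi_mul_I]
  have key : Complex.exp (-(2 * Real.pi * Complex.I) / 3) * ee ^ 8 = 1 := by
    rw [ee, ← Complex.exp_nat_mul, ← Complex.exp_add]
    push_cast
    have : -(2 * (Real.pi:ℂ) * I) / 3 + 8 * ((Real.pi:ℂ) * I / 12) = 0 := by ring
    rw [this, Complex.exp_zero]
  calc Complex.exp (-(2 * Real.pi * Complex.I) / 3)
      = Complex.exp (-(2 * Real.pi * Complex.I) / 3) * (ee ^ 8 * ee ^ 16) := by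
        rw [← pow_add]; norm_num [h24]
    _ = ee ^ 16 := by rw [← mul_assoc, key, one_mul]

lemma hs2 : ((Real.sqrt 2 : ℝ) : ℂ) ^ 2 = 2 := by
  norm_cast
  rw [Real.sq_sqrt]; norm_num

lemma hs3 : ((Real.sqrt 3 : ℝ) : ℂ) ^ 2 = 3 := by
  norm_cast
  rw [Real.sq_sqrt]; norm_num

lemma hs2ne : ((Real.sqrt 2 : ℝ) : ℂ) ≠ 0 := by
  simp [Real.sqrt_eq_zero']

lemma h1 : ((Real.sqrt 2 : ℝ) : ℂ)⁻¹ * ee ^ 7 =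
    (1 + I) * (1 + ((Real.sqrt 3 : ℝ) : ℂ) * I) / 4 := by
  have hinv : ((Real.sqrt 2 : ℝ) : ℂ)⁻¹ = ((Real.sqrt 2 : ℝ) : ℂ) / 2 := by
    field_simp
    linear_combination -hs2
  have h : ee ^ 7 = ee ^ 3 * ee ^ 4 := by ring
  rw [h, he3, he4, hinv]
  push_cast
  linear_combination (((1 + I) * (1 + ((Real.sqrt 3 : ℝ) : ℂ) * I)) / 8) * hs2

lemma h8 : ee ^ 8 = (-1 + ((Real.sqrt 3 : ℝ) : ℂ) * I) / 2 := by
  have h : ee ^ 8 = (ee ^ 4) ^ 2 := by ring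
  rw [h, he4]
  push_cast
  linear_combination (I ^ 2 / 4) * hs3 + (3 / 4) * Complex.I_sq

lemma h16 : ee ^ 16 = (-1 - ((Real.sqrt 3 : ℝ) : ℂ) * I) / 2 := by
  have h : ee ^ 16 = (ee ^ 8) ^ 2 := by ring
  rw [h, h8]
  linear_combination (I ^ 2 / 4) * hs3 + (3 / 4) * Complex.I_sq

lemma h17conj : (starRingEnd ℂ) (Complex.exp (7 * Real.pi * Complex.I / 12)) = ee ^ 17 := by
  rw [← Complex.exp_conj]
  have hc : (starRingEnd ℂ) (7 * Real.pi * Complex.I / 12) = -(7 * Real.pi * Complex.I / 12) := by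
    simp [map_div₀, map_ofNat, Complex.conj_I]
    ring
  rw [hc, ee, ← Complex.exp_nat_mul]
  rw [show -(7 * (Real.pi:ℂ) * I / 12) = ((17:ℕ):ℂ) * ((Real.pi:ℂ) * I / 12) + (-(2 * Real.pi * I)) by push_cast; ring]
  rw [Complex.exp_add]
  have : Complex.exp (-(2 * (Real.pi:ℂ) * I)) = 1 := by
    rw [show -(2 * (Real.pi:ℂ) * I) = (-1 : ℤ) * (2 * Real.pi * I) by push_cast; ring,
      Complex.exp_int_mul_two_pi_mul_I]
  rw [this, mul_one]

lemma h17 : ((Real.sqrt 2 : ℝ) : ℂ)⁻¹ * ee ^ 17 =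
    (1 - I) * (1 - ((Real.sqrt 3 : ℝ) : ℂ) * I) / 4 := by
  have hinv : ((Real.sqrt 2 : ℝ) : ℂ)⁻¹ = ((Real.sqrt 2 : ℝ) : ℂ) / 2 := by
    field_simp
    linear_combination -hs2
  have h : ee ^ 17 = ee ^ 3 * ee ^ 6 * ee ^ 8 := by ring
  rw [h, he3, he6, h8, hinv]
  push_cast
  linear_combination (-((Real.sqrt 2:ℝ):ℂ)^2/8 - ((Real.sqrt 3:ℝ):ℂ)/4
      + ((Real.sqrt 3:ℝ):ℂ)*((Real.sqrt 2:ℝ):ℂ)^2/8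
      + I*((Real.sqrt 3:ℝ):ℂ)*((Real.sqrt 2:ℝ):ℂ)^2/8) * Complex.I_sq
    + (1/8 - ((Real.sqrt 3:ℝ):ℂ)/8 - I/8 - I*((Real.sqrt 3:ℝ):ℂ)/8) * hs2

lemma spec_MM (μ : ℂ) : μ ∈ spectrum ℂ MM ↔ μ = 1 ∨ μ = ee ^ 8 := by
  rw [spectrum.mem_iff, Matrix.isUnit_iff_isUnit_det, isUnit_iff_ne_zero, not_not,
    Matrix.det_fin_two]
  simp only [MM, Matrix.algebraMap_matrix_apply, Matrix.smul_apply, Matrix.sub_apply,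
    Matrix.one_apply]
  simp [MM, Matrix.algebraMap_matrix_apply, Matrix.one_apply, h7exp]
  rw [h1]
  have key : (μ - (1 + I) * (1 + ((Real.sqrt 3:ℝ):ℂ) * I) / 4) *
      (μ + (1 + I) * (1 + ((Real.sqrt 3:ℝ):ℂ) * I) / 4 * I) -
      (1 + I) * (1 + ((Real.sqrt 3:ℝ):ℂ) * I) / 4 * I *
      ((1 + I) * (1 + ((Real.sqrt 3:ℝ):ℂ) * I) / 4) = (μ - 1) * (μ - ee ^ 8) := by
    rw [h8]
    linear_combination (-1/4 + ((Real.sqrt 3:ℝ):ℂ)^2/4 - I/8 - I*((Real.sqrt 3:ℝ):ℂ)/2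
      - I^2*((Real.sqrt 3:ℝ):ℂ)/4 - I^2*((Real.sqrt 3:ℝ):ℂ)^2/4 - I^3*((Real.sqrt 3:ℝ):ℂ)^2/8
      + μ/4 + μ*I*((Real.sqrt 3:ℝ):ℂ)/4) * Complex.I_sq + (-1/4) * hs3
  rw [key, mul_eq_zero, sub_eq_zero, sub_eq_zero]

lemma spec_MMbar (μ : ℂ) : μ ∈ spectrum ℂ MMbar ↔ μ = 1 ∨ μ = ee ^ 16 := by
  rw [spectrum.mem_iff, Matrix.isUnit_iff_isUnit_det, isUnit_iff_ne_zero, not_not,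
    Matrix.det_fin_two]
  simp [MMbar, MM, Matrix.algebraMap_matrix_apply, Matrix.one_apply, h17conj]
  rw [h17]
  have key : (μ - (1 - I) * (1 - ((Real.sqrt 3:ℝ):ℂ) * I) / 4) *
      (μ - (1 - I) * (1 - ((Real.sqrt 3:ℝ):ℂ) * I) / 4 * I) +
      (1 - I) * (1 - ((Real.sqrt 3:ℝ):ℂ) * I) / 4 * I *
      ((1 - I) * (1 - ((Real.sqrt 3:ℝ):ℂ) * I) / 4) = (μ - 1) * (μ - ee ^ 16) := by
    rw [h16]
    linear_combination (-1/4 + ((Real.sqrt 3:ℝ):ℂ)^2/4 + I/8 + I*((Real.sqrt 3:ℝ):ℂ)/2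
      - I^2*((Real.sqrt 3:ℝ):ℂ)/4 - I^2*((Real.sqrt 3:ℝ):ℂ)^2/4 + I^3*((Real.sqrt 3:ℝ):ℂ)^2/8
      + μ/4 - μ*I*((Real.sqrt 3:ℝ):ℂ)/4) * Complex.I_sq + (-1/4) * hs3
  rw [key, mul_eq_zero, sub_eq_zero, sub_eq_zero]

lemma hs3pos : (0:ℝ) < Real.sqrt 3 := Real.sqrt_pos.mpr (by norm_num)

lemma hne1 : ee ^ 16 ≠ 1 := by
  rw [h16]
  intro h
  have := congrArg Complex.im h
  simp at this

lemma hne2 : ee ^ 16 ≠ ee ^ 8 := by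
  rw [h16, h8]
  intro h
  have := congrArg Complex.im h
  simp at this
  linarith [hs3pos, this]

/-- The eigenvalues of `M` are `1` and `e^{2πi/3}`, those of `M̄` are `1` and
`e^{−2πi/3}`; in particular `M` is not similar to `M̄`. -/
theorem M_not_similar_to_conjugate :
    spectrum ℂ MM = {1, Complex.exp (2 * Real.pi * Complex.I / 3)} ∧
    spectrum ℂ MMbar = {1, Complex.exp (-(2 * Real.pi * Complex.I) / 3)} ∧
    ¬ ∃ P : Matrix (Fin 2) (Fin 2) ℂ, IsUnit P ∧ P⁻¹ * MM * P = MMbar := by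
  have hMM : spectrum ℂ MM = {1, ee ^ 8} := by
    ext μ; rw [spec_MM]; simp [Set.mem_insert_iff]
  have hMMbar : spectrum ℂ MMbar = {1, ee ^ 16} := by
    ext μ; rw [spec_MMbar]; simp [Set.mem_insert_iff]
  refine ⟨by rw [hMM, hwexp], by rw [hMMbar, hw'exp], ?_⟩
  rintro ⟨P, hPu, hP⟩
  obtain ⟨u, rfl⟩ := hPu
  rw [← Matrix.coe_units_inv] at hP
  have hspec : spectrum ℂ MMbar = spectrum ℂ MM := by
    rw [← hP]
    have := @spectrum.units_conjugate ℂ (Matrix (Fin 2) (Fin 2) ℂ) _ _ _ MM u⁻¹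
    simpa using this
  rw [hMM, hMMbar] at hspec
  have : ee ^ 16 ∈ ({1, ee ^ 8} : Set ℂ) := by
    rw [← hspec]; simp
  rcases this with h | h
  · exact hne1 h
  · exact hne2 h
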